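/- Let x,y be vertices with d(x,y) = δ ≥ 2 and let l = lcm(d_x, d_y). Then the idleness function p ↦ κ_p(x,y) is linear on the interval [0, 1/(1+l)], i.e. every critical point p* of the idleness function satisfies p* ≥ 1/(1+l). -/

import Mathlib

open scoped BigOperators

namespace OllivierLong

variable {V : Type*}

/-- A finitely supported probability distribution on `V`. -/
def IsProb (μ : V → ℝ) : Prop :=
  (∀ v, 0 ≤ μ v) ∧ (Function.support μ).Finite ∧ ∑ᶠ v, μ v = 1

/-- A coupling (transport plan) between two distributions. -/
def IsCoupling (μ₁ μ₂ : V → ℝ) (π : V → V → ℝ) : Prop :=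
  (∀ x y, 0 ≤ π x y) ∧ (∀ x, ∑ᶠ y, π x y = μ₁ x) ∧ (∀ y, ∑ᶠ x, π x y = μ₂ y)

/-- The 1-Wasserstein distance w.r.t. the combinatorial graph distance. -/
noncomputable def W1 (G : SimpleGraph V) (μ₁ μ₂ : V → ℝ) : ℝ :=
  sInf {r | ∃ π, IsCoupling μ₁ μ₂ π ∧ r = ∑ᶠ x, ∑ᶠ y, (G.dist x y : ℝ) * π x y}

/-- A real valued function is 1-Lipschitz w.r.t. the graph distance. -/
def Lip (G : SimpleGraph V) (φ : V → ℝ) : Prop :=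
  ∀ u v, |φ u - φ v| ≤ G.dist u v

/-- An integer valued function is 1-Lipschitz w.r.t. the graph distance. -/
def IntLip (G : SimpleGraph V) (φ : V → ℤ) : Prop :=
  ∀ u v, |φ u - φ v| ≤ (G.dist u v : ℤ)

open Classical in
/-- The lazy random walk measure with idleness `p` at `x`. -/
noncomputable def mu (G : SimpleGraph V) [G.LocallyFinite] (p : ℝ) (x : V) : V → ℝ :=
  fun z => if z = x then p else if G.Adj x z then (1 - p) / (G.degree x) else 0

/-- The `p`-Ollivier-Ricci curvature. -/
noncomputable def kappa (G : SimpleGraph V) [G.LocallyFinite] (p : ℝ) (x y : V) : ℝ :=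
  1 - W1 G (mu G p x) (mu G p y) / (G.dist x y)

/-- `K` is the Lin–Lu–Yau curvature of the pair `(x, y)`:
the limit of `κ_p(x,y)/(1-p)` as `p → 1⁻`. -/
def IsLLY (G : SimpleGraph V) [G.LocallyFinite] (x y : V) (K : ℝ) : Prop :=
  Filter.Tendsto (fun p => kappa G p x y / (1 - p)) (nhdsWithin 1 (Set.Iio 1)) (nhds K)


/-! ### Auxiliary lemmas -/

section Helpers

variable (G : SimpleGraph V) [G.LocallyFinite]

lemma mu_self (p : ℝ) (x : V) : mu G p x x = p := by simp [mu]

lemma mu_adj (p : ℝ) {x z : V} (h : G.Adj x z) : mu G p x z = (1 - p) / (G.degree x) := by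
  have hzx : z ≠ x := fun e => G.irrefl (e ▸ h)
  simp [mu, hzx, h]

lemma mu_zero' (p : ℝ) {x z : V} (h1 : z ≠ x) (h2 : ¬ G.Adj x z) : mu G p x z = 0 := by
  simp [mu, h1, h2]

lemma mu_nonneg {p : ℝ} (hp0 : 0 ≤ p) (hp1 : p ≤ 1) (x z : V) : 0 ≤ mu G p x z := by
  unfold mu
  split_ifs with h1 h2
  · exact hp0
  · exact div_nonneg (by linarith) (Nat.cast_nonneg _)
  · exact le_refl 0

open Classical in
lemma mu_split (p : ℝ) (x z : V) :
    mu G p x z = (if z = x then p else 0) + (if G.Adj x z then (1 - p) / (G.degree x) else 0) := by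
  by_cases h1 : z = x
  · have : ¬ G.Adj x z := by subst h1; exact fun h => G.irrefl h
    simp [mu, h1, this]
  · simp [mu, h1]

lemma support_mu (p : ℝ) (x : V) :
    Function.support (mu G p x) ⊆ insert x (G.neighborFinset x : Set V) := by
  intro z hz
  simp only [Function.mem_support] at hz
  by_cases h1 : z = x
  · simp [h1]
  · by_cases h2 : G.Adj x z
    · simp [SimpleGraph.mem_neighborFinset, h2]
    · exact absurd (mu_zero' G p h1 h2) hz

lemma degree_pos (hconn : G.Connected) {x y : V} (hxy : x ≠ y) : 0 < G.degree x := by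
  obtain ⟨w⟩ := hconn.preconnected x y
  have hnil : ¬ w.Nil := SimpleGraph.Walk.not_nil_of_ne hxy
  exact G.degree_pos_iff_exists_adj x |>.mpr ⟨w.getVert 1, w.adj_snd hnil⟩

end Helpers

open Classical in
lemma W1_lower (G : SimpleGraph V) [G.LocallyFinite] (hconn : G.Connected) {x y : V}
    (hd : 2 ≤ G.dist x y) {p : ℝ} (hp0 : 0 ≤ p) (hp1 : p < 1)
    {π : V → V → ℝ} (hπ : IsCoupling (mu G p x) (mu G p y) π) :
    (1 - p) * ((G.neighborFinset x ∩ G.neighborFinset y).card : ℝ)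
        * max 0 (1/(G.degree x : ℝ) - 1/(G.degree y : ℝ))
      ≤ ∑ᶠ z, ∑ᶠ w, (G.dist z w : ℝ) * π z w := by
  obtain ⟨hpos, hrow, hcol⟩ := hπ
  have hxy : x ≠ y := by
    rintro rfl; rw [SimpleGraph.dist_self] at hd; omega
  have hdy : (0:ℝ) < G.degree y := by
    exact_mod_cast (by exact_mod_cast (by
      exact Nat.pos_of_ne_zero (fun h0 => by
        have : 0 < G.degree y := by
          obtain ⟨w⟩ := hconn.preconnected y x
          have hnil : ¬ w.Nil := SimpleGraph.Walk.not_nil_of_ne (Ne.symm hxy)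
          exact (G.degree_pos_iff_exists_adj y).mpr ⟨w.getVert 1, w.adj_snd hnil⟩
        omega) : 0 < G.degree y) : (0:ℕ) < G.degree y)
  have hdx : (0:ℝ) < G.degree x := by
    have : 0 < G.degree x := by
      obtain ⟨w⟩ := hconn.preconnected x y
      have hnil : ¬ w.Nil := SimpleGraph.Walk.not_nil_of_ne hxy
      exact (G.degree_pos_iff_exists_adj x).mpr ⟨w.getVert 1, w.adj_snd hnil⟩
    exact_mod_cast this
  set f : V → ℝ := fun z => ∑ᶠ w, (G.dist z w : ℝ) * π z w with hf
  have hf0 : ∀ z, 0 ≤ f z := fun z =>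
    finsum_nonneg fun w => mul_nonneg (Nat.cast_nonneg _) (hpos z w)
  set F1 : Finset V := insert x (G.neighborFinset x) with hF1
  -- support of f is contained in F1
  have hsupp : Function.support f ⊆ (F1 : Set V) := by
    intro z hz
    by_contra hzF
    apply hz
    have hz_ne : z ≠ x := by rintro rfl; exact hzF (by simp [hF1])
    have hz_nadj : ¬ G.Adj x z := fun h => hzF (by simp [hF1, SimpleGraph.mem_neighborFinset, h])
    have hμz : mu G p x z = 0 := mu_zero' G p hz_ne hz_nadj
    by_cases hfin : (Function.support (π z)).Finite
    · have hall : ∀ w, π z w = 0 := by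
        intro w
        have hsum : ∑ w' ∈ hfin.toFinset, π z w' = 0 := by
          rw [← finsum_eq_sum_of_support_subset _ (by simp)]
          rw [hrow z, hμz]
        by_cases hw : w ∈ hfin.toFinset
        · exact (Finset.sum_eq_zero_iff_of_nonneg (fun i _ => hpos z i)).mp hsum w hw
        · simpa [Function.mem_support, not_not] using (by simpa using hw : ¬ π z w ≠ 0)
      show f z = 0
      rw [hf]
      simp only
      rw [finsum_eq_zero_of_forall_eq_zero fun w => by rw [hall w, mul_zero]]
    · show f z = 0
      apply finsum_of_infinite_support
      apply Set.Infinite.mono (s := Function.support (π z) \ {z})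
      · intro w hw
        have hne : w ≠ z := by simpa using hw.2
        have : G.dist z w ≠ 0 := Nat.pos_iff_ne_zero.mp (hconn.pos_dist_of_ne hne.symm)
        simp only [Function.mem_support]
        exact mul_ne_zero (by exact_mod_cast this) hw.1
      · exact Set.Infinite.diff hfin (Set.finite_singleton z)
  have htot : ∑ᶠ z, f z = ∑ z ∈ F1, f z := finsum_eq_sum_of_support_subset _ hsupp
  set s : Finset V := G.neighborFinset x ∩ G.neighborFinset y with hs
  have hsF1 : s ⊆ F1 := Finset.Subset.trans Finset.inter_subset_left (Finset.subset_insert _ _)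
  have key : ∀ z ∈ s, (1 - p) * max 0 (1/(G.degree x:ℝ) - 1/(G.degree y:ℝ)) ≤ f z := by
    intro z hz
    have hz' := hz
    rw [hs, Finset.mem_inter, SimpleGraph.mem_neighborFinset, SimpleGraph.mem_neighborFinset] at hz'
    obtain ⟨hax, hay⟩ := hz'
    have hμ1 : mu G p x z = (1-p)/(G.degree x) := mu_adj G p hax
    have hμ2 : mu G p y z = (1-p)/(G.degree y) := mu_adj G p hay
    have h1p : 0 < 1 - p := by linarith
    have hμ2pos : 0 < mu G p y z := by rw [hμ2]; positivity
    have hμ1pos : 0 < mu G p x z := by rw [hμ1]; positivity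
    have hcolfin : (Function.support (fun w => π w z)).Finite := by
      by_contra h
      have h0 := finsum_of_infinite_support h
      rw [hcol z] at h0
      exact hμ2pos.ne' h0
    have hπzz : π z z ≤ mu G p y z := by
      rw [← hcol z, finsum_eq_sum_of_support_subset _ (by rw [hcolfin.coe_toFinset])]
      by_cases hzz : z ∈ hcolfin.toFinset
      · exact Finset.single_le_sum (fun i _ => hpos i z) hzz
      · have : π z z = 0 := by simpa [Function.mem_support, not_not] using hzz
        rw [this]
        exact Finset.sum_nonneg fun i _ => hpos i z
    have hrowfin : (Function.support (π z)).Finite := by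
      by_contra h
      have h0 := finsum_of_infinite_support h
      rw [hrow z] at h0
      exact hμ1pos.ne' h0
    have hfz : f z = ∑ w ∈ hrowfin.toFinset, (G.dist z w : ℝ) * π z w := by
      apply finsum_eq_sum_of_support_subset
      intro w hw
      simp only [Function.mem_support] at hw
      simp only [Set.Finite.coe_toFinset, Function.mem_support]
      intro h0
      exact hw (by rw [h0, mul_zero])
    have hstep : ∑ w ∈ hrowfin.toFinset, (π z w - (if w = z then π z w else 0))
        ≤ ∑ w ∈ hrowfin.toFinset, (G.dist z w : ℝ) * π z w := by
      apply Finset.sum_le_sum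
      intro w _
      by_cases hwz : w = z
      · subst hwz
        simp [SimpleGraph.dist_self]
      · have hdist : 1 ≤ G.dist z w := hconn.pos_dist_of_ne (fun h => hwz (h.symm))
        have : (1:ℝ) ≤ (G.dist z w : ℝ) := by exact_mod_cast hdist
        simp only [hwz, if_false, sub_zero]
        nlinarith [hpos z w]
    have hsum1 : ∑ w ∈ hrowfin.toFinset, π z w = mu G p x z := by
      rw [← hrow z]
      exact (finsum_eq_sum_of_support_subset _ (by rw [hrowfin.coe_toFinset])).symm
    have hsum2 : ∑ w ∈ hrowfin.toFinset, (if w = z then π z w else 0)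
        = if z ∈ hrowfin.toFinset then π z z else 0 := Finset.sum_ite_eq' _ _ _
    have hlow : mu G p x z - mu G p y z ≤ f z := by
      rw [hfz]
      refine le_trans ?_ hstep
      rw [Finset.sum_sub_distrib, hsum1, hsum2]
      by_cases hzz : z ∈ hrowfin.toFinset
      · simp only [hzz, if_true]
        linarith [hπzz]
      · simp only [hzz, if_false, sub_zero]
        linarith [hμ2pos.le]
    have hmax : (1 - p) * max 0 (1/(G.degree x:ℝ) - 1/(G.degree y:ℝ))
        = max 0 (mu G p x z - mu G p y z) := by
      rw [hμ1, hμ2]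
      rw [mul_max_of_nonneg _ _ h1p.le, mul_zero]
      congr 1
      field_simp
    rw [hmax]
    exact max_le (hf0 z) hlow
  have hfinal : ∑ z ∈ s, ((1 - p) * max 0 (1/(G.degree x:ℝ) - 1/(G.degree y:ℝ))) ≤ ∑ᶠ z, f z := by
    rw [htot]
    calc ∑ z ∈ s, ((1 - p) * max 0 (1/(G.degree x:ℝ) - 1/(G.degree y:ℝ)))
        ≤ ∑ z ∈ s, f z := Finset.sum_le_sum key
      _ ≤ ∑ z ∈ F1, f z := Finset.sum_le_sum_of_subset_of_nonneg hsF1 (fun i _ _ => hf0 i)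
  rw [Finset.sum_const, nsmul_eq_mul] at hfinal
  calc (1 - p) * (s.card : ℝ) * max 0 (1/(G.degree x : ℝ) - 1/(G.degree y : ℝ))
      = (s.card : ℝ) * ((1 - p) * max 0 (1/(G.degree x:ℝ) - 1/(G.degree y:ℝ))) := by ring
    _ ≤ ∑ᶠ z, f z := hfinal
    _ = ∑ᶠ z, ∑ᶠ w, (G.dist z w : ℝ) * π z w := rfl

open Classical in
lemma W1_infinite [Infinite V] (G : SimpleGraph V) [G.LocallyFinite] (hconn : G.Connected)
    {x y : V} (hd : 2 ≤ G.dist x y) {p : ℝ} (hp0 : 0 ≤ p) (hp1 : p ≤ 1) :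
    W1 G (mu G p x) (mu G p y)
      = (1 - p) * ((G.neighborFinset x ∩ G.neighborFinset y).card : ℝ)
          * max 0 (1/(G.degree x : ℝ) - 1/(G.degree y : ℝ)) := by
  classical
  have hxy : x ≠ y := by rintro rfl; rw [SimpleGraph.dist_self] at hd; omega
  have hnadj : ¬ G.Adj x y := by
    intro h
    have : G.dist x y = 1 := SimpleGraph.dist_eq_one_iff_adj.mpr h
    omega
  have hμ2x : mu G p y x = 0 := mu_zero' G p hxy (fun h => hnadj h.symm)
  have hμ1y : mu G p x y = 0 := mu_zero' G p (Ne.symm hxy) hnadj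
  set μ₁ := mu G p x with hμ₁
  set μ₂ := mu G p y with hμ₂
  set dx : ℝ := (G.degree x : ℝ) with hdx
  set dy : ℝ := (G.degree y : ℝ) with hdy
  set c0 : ℝ := max 0 (1/dx - 1/dy) with hc0
  set s : Finset V := G.neighborFinset x ∩ G.neighborFinset y with hs
  set K : Finset V := insert x (insert y (G.neighborFinset x ∪ G.neighborFinset y)) with hK
  set A : Set V := (↑K : Set V)ᶜ with hA
  have hAinf : A.Infinite := K.finite_toSet.infinite_compl
  obtain ⟨a₀, ha₀⟩ := hAinf.nonempty
  have hsuppK : ∀ z, z ∉ K → μ₁ z = 0 ∧ μ₂ z = 0 := by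
    intro z hz
    simp only [hK, Finset.mem_insert, Finset.mem_union, SimpleGraph.mem_neighborFinset] at hz
    push_neg at hz
    exact ⟨mu_zero' G p hz.1 hz.2.2.1, mu_zero' G p hz.2.1 hz.2.2.2⟩
  have hA0 : ∀ z ∈ A, μ₁ z = 0 ∧ μ₂ z = 0 := fun z hz => hsuppK z (by simpa [hA] using hz)
  have hμ1nn : ∀ z, 0 ≤ μ₁ z := by
    intro z; rw [hμ₁]
    unfold mu; split_ifs with h1 h2
    · exact hp0
    · exact div_nonneg (by linarith) (Nat.cast_nonneg _)
    · exact le_refl 0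
  have hμ2nn : ∀ z, 0 ≤ μ₂ z := by
    intro z; rw [hμ₂]
    unfold mu; split_ifs with h1 h2
    · exact hp0
    · exact div_nonneg (by linarith) (Nat.cast_nonneg _)
    · exact le_refl 0
  set keep : V → ℝ := fun z => if μ₂ z = 0 then μ₁ z else min (μ₁ z) (μ₂ z) with hkeep
  set exce : V → ℝ := fun z => μ₁ z - keep z with hexce
  set defi : V → ℝ := fun w => μ₂ w - keep w with hdefi
  have hkeep_nn : ∀ z, 0 ≤ keep z := by
    intro z; rw [hkeep]; dsimp only
    split_ifs
    · exact hμ1nn z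
    · exact le_min (hμ1nn z) (hμ2nn z)
  have hkeep_le1 : ∀ z, keep z ≤ μ₁ z := by
    intro z; rw [hkeep]; dsimp only
    split_ifs
    · exact le_refl _
    · exact min_le_left _ _
  have hexce_nn : ∀ z, 0 ≤ exce z := fun z => by rw [hexce]; dsimp only; linarith [hkeep_le1 z]
  have hdefi_nn : ∀ w, μ₂ w ≠ 0 → 0 ≤ defi w := by
    intro w hw; rw [hdefi, hkeep]; dsimp only
    rw [if_neg hw]
    have := min_le_right (μ₁ w) (μ₂ w); linarith
  set π : V → V → ℝ := fun z w =>
    if z ∈ A then (if μ₂ w = 0 then 1 else if z = a₀ then defi w else 0)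
    else ((if w = z then keep z else 0) + (if w = x ∧ z ≠ x then exce z else 0)) with hπ
  have ha₀K : a₀ ∉ K := by simpa [hA] using ha₀
  -- nonnegativity of π
  have hπnn : ∀ z w, 0 ≤ π z w := by
    intro z w
    rw [hπ]; dsimp only
    split_ifs with h1 h2 h3 h4 h5
    · exact zero_le_one
    · exact hdefi_nn w h2
    · exact le_refl 0
    all_goals first
      | exact add_nonneg (hkeep_nn z) (hexce_nn z)
      | exact hkeep_nn z
      | exact hexce_nn z
      | exact le_refl 0
      | exact add_nonneg (hkeep_nn z) le_rfl
      | exact add_nonneg le_rfl (hexce_nn z)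
      | positivity
  -- rows
  have hrow : ∀ z, ∑ᶠ w, π z w = μ₁ z := by
    intro z
    by_cases hzA : z ∈ A
    · rw [(hA0 z hzA).1]
      apply finsum_of_infinite_support
      apply Set.Infinite.mono (s := A)
      · intro w hw
        have : μ₂ w = 0 := (hA0 w hw).2
        simp only [Function.mem_support, hπ, if_pos hzA, this, if_pos]
        exact one_ne_zero
      · exact hAinf
    · have hsub : Function.support (π z) ⊆ (↑({z, x} : Finset V) : Set V) := by
        intro w hw
        simp only [Function.mem_support, hπ, if_neg hzA] at hw
        simp only [Finset.coe_insert, Finset.coe_singleton, Set.mem_insert_iff,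
          Set.mem_singleton_iff]
        by_contra hc
        push_neg at hc
        apply hw
        rw [if_neg hc.1, if_neg (fun h => hc.2 h.1)]
        ring
      rw [finsum_eq_sum_of_support_subset _ hsub]
      by_cases hzx : z = x
      · subst hzx
        rw [Finset.pair_eq_singleton, Finset.sum_singleton]
        have e1 : π z z = keep z := by
          rw [hπ]; dsimp only
          rw [if_neg hzA, if_pos rfl, if_neg (by simp : ¬ (z = z ∧ z ≠ z)), add_zero]
        rw [e1, hkeep]; dsimp only
        rw [if_pos hμ2x]
      · rw [Finset.sum_pair hzx]
        have e1 : π z z = keep z := by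
          rw [hπ]; dsimp only
          rw [if_neg hzA, if_pos rfl, if_neg (fun h => hzx h.1), add_zero]
        have e2 : π z x = exce z := by
          rw [hπ]; dsimp only
          rw [if_neg hzA, if_neg (fun h : x = z => hzx h.symm), if_pos ⟨rfl, hzx⟩, zero_add]
        rw [e1, e2, hexce]; dsimp only; ring
  -- columns
  have hcolA : ∀ w, μ₂ w = 0 → ∑ᶠ z, π z w = μ₂ w := by
    intro w hw
    rw [hw]
    apply finsum_of_infinite_support
    apply Set.Infinite.mono (s := A)
    · intro z hz
      simp only [Function.mem_support, hπ, if_pos hz, hw, if_pos]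
      exact one_ne_zero
    · exact hAinf
  have hcol : ∀ w, ∑ᶠ z, π z w = μ₂ w := by
    intro w
    by_cases hw : μ₂ w = 0
    · exact hcolA w hw
    · have hwK : w ∈ K := by
        by_contra hc
        exact hw (hsuppK w hc).2
      have hwA : w ∉ A := by simpa [hA] using hwK
      have hwa₀ : w ≠ a₀ := fun h => ha₀K (h ▸ hwK)
      have hwx : w ≠ x := fun h => hw (h ▸ hμ2x)
      have hsub : Function.support (fun z => π z w) ⊆ (↑({w, a₀} : Finset V) : Set V) := by
        intro z hz
        simp only [Function.mem_support, hπ] at hz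
        simp only [Finset.coe_insert, Finset.coe_singleton, Set.mem_insert_iff,
          Set.mem_singleton_iff]
        by_contra hc
        push_neg at hc
        apply hz
        by_cases hzA : z ∈ A
        · rw [if_pos hzA, if_neg hw, if_neg hc.2]
        · rw [if_neg hzA, if_neg (fun h : w = z => hc.1 h.symm),
            if_neg (fun h => hwx h.1)]
          ring
      rw [finsum_eq_sum_of_support_subset _ hsub, Finset.sum_pair hwa₀]
      have h1 : π w w = keep w := by
        rw [hπ]; dsimp only
        rw [if_neg hwA, if_pos rfl, if_neg (fun h => hwx h.1), add_zero]
      have h2 : π a₀ w = defi w := by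
        rw [hπ]; dsimp only
        rw [if_pos ha₀, if_neg hw, if_pos rfl]
      rw [h1, h2, hdefi]; dsimp only; ring
  -- cost
  set g : V → ℝ := fun z => ∑ᶠ w, (G.dist z w : ℝ) * π z w with hg
  have hgA : ∀ z ∈ A, g z = 0 := by
    intro z hz
    apply finsum_of_infinite_support
    apply Set.Infinite.mono (s := A \ {z})
    · intro w hw
      have hwA : w ∈ A := hw.1
      have hwz : w ≠ z := by simpa using hw.2
      have hdzw : G.dist z w ≠ 0 := Nat.pos_iff_ne_zero.mp (hconn.pos_dist_of_ne (Ne.symm hwz))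
      simp only [Function.mem_support, hπ, if_pos hz, (hA0 w hwA).2, if_pos]
      exact mul_ne_zero (by exact_mod_cast hdzw) one_ne_zero
    · exact hAinf.diff (Set.finite_singleton z)
  have hgnotA : ∀ z, z ∉ A → z ≠ x → g z = (G.dist z x : ℝ) * exce z := by
    intro z hzA hzx
    have hsub : Function.support (fun w => (G.dist z w : ℝ) * π z w)
        ⊆ (↑({x} : Finset V) : Set V) := by
      intro w hw
      simp only [Function.mem_support, hπ, if_neg hzA] at hw
      simp only [Finset.coe_singleton, Set.mem_singleton_iff]
      by_contra hc
      apply hw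
      by_cases hwz : w = z
      · subst hwz
        rw [SimpleGraph.dist_self]
        norm_num
      · rw [if_neg hwz, if_neg (fun h => hc h.1)]
        ring
    rw [hg]; dsimp only
    rw [finsum_eq_sum_of_support_subset _ hsub, Finset.sum_singleton]
    have : π z x = exce z := by
      rw [hπ]; dsimp only
      rw [if_neg hzA, if_neg (fun h : x = z => hzx h.symm), if_pos ⟨rfl, hzx⟩, zero_add]
    rw [hπ] at this ⊢
    rw [this]
  have hgx : g x = 0 := by
    have hxA : x ∉ A := by simp [hA, hK]
    have hsub : Function.support (fun w => (G.dist x w : ℝ) * π x w)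
        ⊆ (∅ : Set V) := by
      intro w hw
      simp only [Function.mem_support, hπ, if_neg hxA] at hw
      exfalso
      apply hw
      by_cases hwx : w = x
      · subst hwx
        rw [SimpleGraph.dist_self]; norm_num
      · rw [if_neg hwx, if_neg (fun h => hwx h.1)]
        ring
    rw [hg]; dsimp only
    rw [finsum_eq_sum_of_support_subset _ (by simpa using hsub : Function.support _ ⊆ (↑(∅ : Finset V) : Set V)), Finset.sum_empty]
  -- exce on common neighbours
  have hexce_s : ∀ z ∈ s, exce z = (1 - p) * c0 := by
    intro z hz
    rw [hs, Finset.mem_inter, SimpleGraph.mem_neighborFinset, SimpleGraph.mem_neighborFinset] at hz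
    obtain ⟨hax, hay⟩ := hz
    have hμ1z : μ₁ z = (1 - p)/dx := mu_adj G p hax
    have hμ2z : μ₂ z = (1 - p)/dy := mu_adj G p hay
    have hdy0 : (0:ℝ) < dy := by
      rw [hdy]
      exact_mod_cast (G.degree_pos_iff_exists_adj y).mpr ⟨z, hay⟩
    have hdx0 : (0:ℝ) < dx := by
      rw [hdx]
      exact_mod_cast (G.degree_pos_iff_exists_adj x).mpr ⟨z, hax⟩
    by_cases hp1' : p = 1
    · subst hp1'
      have hz2 : μ₂ z = 0 := by rw [hμ2z]; norm_num
      rw [hexce, hkeep]; dsimp only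
      rw [if_pos hz2]
      norm_num
    · have h1p : 0 < 1 - p := lt_of_le_of_ne (by linarith) (fun h => hp1' (by linarith))
      have hz2 : μ₂ z ≠ 0 := by
        rw [hμ2z]
        positivity
      rw [hexce, hkeep]; dsimp only
      rw [if_neg hz2, hμ1z, hμ2z]
      rcases le_total ((1-p)/dx) ((1-p)/dy) with h | h
      · rw [min_eq_left h]
        have : 1/dx - 1/dy ≤ 0 := by
          rw [div_le_div_iff₀ hdx0 hdy0] at h
          rw [sub_nonpos, div_le_div_iff₀ hdx0 hdy0]
          nlinarith
        rw [hc0, max_eq_left this]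
        ring
      · rw [min_eq_right h]
        have : 0 ≤ 1/dx - 1/dy := by
          rw [div_le_div_iff₀ hdy0 hdx0] at h
          rw [sub_nonneg, div_le_div_iff₀ hdy0 hdx0]
          nlinarith
        rw [hc0, max_eq_right this]
        field_simp
  have hexce_not_s : ∀ z, z ∉ A → z ≠ x → z ∉ s → exce z = 0 := by
    intro z hzA hzx hzs
    by_cases hz2 : μ₂ z = 0
    · rw [hexce, hkeep]; dsimp only; rw [if_pos hz2]; ring
    · by_cases hz1 : μ₁ z = 0
      · rw [hexce, hkeep]; dsimp only
        rw [if_neg hz2, hz1, min_eq_left (hμ2nn z), sub_self]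
      · exfalso
        apply hzs
        have hz1' : G.Adj x z := by
          by_contra hc
          exact hz1 (mu_zero' G p hzx hc)
        have hzy : z ≠ y := fun h => hz1 (h ▸ hμ1y)
        have hz2' : G.Adj y z := by
          by_contra hc
          exact hz2 (mu_zero' G p hzy hc)
        rw [hs, Finset.mem_inter, SimpleGraph.mem_neighborFinset, SimpleGraph.mem_neighborFinset]
        exact ⟨hz1', hz2'⟩
  have hgval : ∀ z, g z = if z ∈ s then (1 - p) * c0 else 0 := by
    intro z
    by_cases hzA : z ∈ A
    · rw [if_neg, hgA z hzA]
      intro hzs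
      apply (by simpa [hA] using hzA : z ∉ K)
      rw [hs, Finset.mem_inter, SimpleGraph.mem_neighborFinset] at hzs
      simp [hK, SimpleGraph.mem_neighborFinset, hzs.1]
    · by_cases hzx : z = x
      · subst hzx
        rw [hgx, if_neg]
        intro hzs
        rw [hs, Finset.mem_inter, SimpleGraph.mem_neighborFinset] at hzs
        exact G.irrefl hzs.1
      · rw [hgnotA z hzA hzx]
        by_cases hzs : z ∈ s
        · rw [if_pos hzs, hexce_s z hzs]
          have hax : G.Adj x z := by
            rw [hs, Finset.mem_inter, SimpleGraph.mem_neighborFinset] at hzs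
            exact hzs.1
          have : G.dist z x = 1 := SimpleGraph.dist_eq_one_iff_adj.mpr hax.symm
          rw [this]
          norm_num
        · rw [if_neg hzs, hexce_not_s z hzA hzx hzs, mul_zero]
  have hcost : ∑ᶠ z, g z = (1 - p) * (s.card : ℝ) * c0 := by
    have hsub : Function.support g ⊆ (↑s : Set V) := by
      intro z hz
      simp only [Function.mem_support] at hz
      by_contra hc
      rw [hgval z, if_neg (by simpa using hc)] at hz
      exact hz rfl
    rw [finsum_eq_sum_of_support_subset _ hsub]
    have : ∀ z ∈ s, g z = (1 - p) * c0 := fun z hz => by rw [hgval z, if_pos hz]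
    rw [Finset.sum_congr rfl this, Finset.sum_const, nsmul_eq_mul]
    ring
  -- conclude
  have hmem : (1 - p) * (s.card : ℝ) * c0
      ∈ {r | ∃ π', IsCoupling μ₁ μ₂ π' ∧ r = ∑ᶠ z, ∑ᶠ w, (G.dist z w : ℝ) * π' z w} := by
    exact ⟨π, ⟨hπnn, hrow, hcol⟩, hcost.symm⟩
  have hbdd : ∀ r ∈ {r | ∃ π', IsCoupling μ₁ μ₂ π' ∧
      r = ∑ᶠ z, ∑ᶠ w, (G.dist z w : ℝ) * π' z w}, (0:ℝ) ≤ r := by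
    rintro r ⟨π', ⟨hnn, _, _⟩, rfl⟩
    exact finsum_nonneg fun z => finsum_nonneg fun w => mul_nonneg (Nat.cast_nonneg _) (hnn z w)
  apply le_antisymm
  · exact csInf_le ⟨0, hbdd⟩ hmem
  · apply le_csInf ⟨_, hmem⟩
    rintro r hr
    rcases eq_or_lt_of_le hp1 with hp1' | hp1'
    · have : (1 - p) * (s.card : ℝ) * c0 = 0 := by rw [← hp1']; ring
      rw [this]
      exact hbdd r hr
    · obtain ⟨π', hπ', rfl⟩ := hr
      exact W1_lower G hconn hd hp0 hp1' hπ'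


section Flow
variable {V : Type*} [Fintype V]

open Classical in
noncomputable def upd (z w : V) (γ : ℝ) : V → V → ℝ :=
  fun a b => if a = z ∧ b = w then γ else 0

open Classical in
lemma upd_row (z w : V) (γ : ℝ) (a : V) :
    ∑ b, upd z w γ a b = if a = z then γ else 0 := by
  classical
  unfold upd
  by_cases ha : a = z
  · subst ha
    simp [Finset.sum_ite_eq']
  · simp [ha]

open Classical in
lemma upd_col (z w : V) (γ : ℝ) (b : V) :
    ∑ a, upd z w γ a b = if b = w then γ else 0 := by
  classical
  unfold upd
  by_cases hb : b = w
  · subst hb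
    simp [Finset.sum_ite_eq']
  · simp [hb]

open Classical in
lemma flow_exists (π : V → V → ℝ) (r c : V → ℝ)
    (hπ : ∀ z w, 0 ≤ π z w) (hr : ∀ z, 0 ≤ r z) (hc : ∀ w, 0 ≤ c w)
    (htot : ∑ z, r z = ∑ w, c w)
    (hcut : ∀ S T : Finset V,
      ∑ z ∈ S, r z ≤ (∑ z ∈ S, ∑ w ∈ Tᶜ, π z w) + ∑ w ∈ T, c w) :
    ∃ τ : V → V → ℝ, (∀ z w, 0 ≤ τ z w) ∧ (∀ z w, τ z w ≤ π z w) ∧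
      (∀ z, ∑ w, τ z w = r z) ∧ (∀ w, ∑ z, τ z w = c w) := by
  classical
  set M : Set (V → V → ℝ) := {τ | (∀ z w, 0 ≤ τ z w) ∧ (∀ z w, τ z w ≤ π z w) ∧
      (∀ z, ∑ w, τ z w ≤ r z) ∧ (∀ w, ∑ z, τ z w ≤ c w)} with hM
  have h0M : (fun _ _ => (0:ℝ)) ∈ M := by
    refine ⟨fun _ _ => le_refl 0, fun z w => hπ z w, ?_, ?_⟩ <;> simp [hr, hc]
  have hcont : ∀ (z w : V), Continuous fun τ : V → V → ℝ => τ z w :=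
    fun z w => (continuous_apply w).comp (continuous_apply z)
  have hrowcont : ∀ z : V, Continuous fun τ : V → V → ℝ => ∑ w, τ z w :=
    fun z => continuous_finset_sum _ fun w _ => hcont z w
  have hcolcont : ∀ w : V, Continuous fun τ : V → V → ℝ => ∑ z, τ z w :=
    fun w => continuous_finset_sum _ fun z _ => hcont z w
  have hFcont : Continuous fun τ : V → V → ℝ => ∑ z, ∑ w, τ z w :=
    continuous_finset_sum _ fun z _ => hrowcont z
  have hclosed : IsClosed M := by
    have hMeq : M = (⋂ z, ⋂ w, {τ : V → V → ℝ | 0 ≤ τ z w}) ∩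
        (((⋂ z, ⋂ w, {τ : V → V → ℝ | τ z w ≤ π z w})) ∩
        ((⋂ z, {τ : V → V → ℝ | ∑ w, τ z w ≤ r z}) ∩
         (⋂ w, {τ : V → V → ℝ | ∑ z, τ z w ≤ c w}))) := by
      ext τ
      simp only [hM, Set.mem_setOf_eq, Set.mem_inter_iff, Set.mem_iInter]
    rw [hMeq]
    refine IsClosed.inter ?_ (IsClosed.inter ?_ (IsClosed.inter ?_ ?_))
    · exact isClosed_iInter fun z => isClosed_iInter fun w =>
        isClosed_le continuous_const (hcont z w)
    · exact isClosed_iInter fun z => isClosed_iInter fun w =>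
        isClosed_le (hcont z w) continuous_const
    · exact isClosed_iInter fun z => isClosed_le (hrowcont z) continuous_const
    · exact isClosed_iInter fun w => isClosed_le (hcolcont w) continuous_const
  have hMcomp : IsCompact M := by
    have hbox : IsCompact (Set.pi Set.univ fun z : V =>
        Set.pi Set.univ fun w : V => Set.Icc (0:ℝ) (π z w)) :=
      isCompact_univ_pi fun z => isCompact_univ_pi fun w => isCompact_Icc
    apply hbox.of_isClosed_subset hclosed
    intro τ hτ
    rw [Set.mem_univ_pi]
    intro z
    rw [Set.mem_univ_pi]
    intro w
    exact ⟨hτ.1 z w, hτ.2.1 z w⟩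
  obtain ⟨τ, hτM, hmax⟩ := hMcomp.exists_isMaxOn ⟨_, h0M⟩ hFcont.continuousOn
  obtain ⟨hτ0, hτπ, hτr, hτc⟩ := hτM
  suffices hFr : ∑ z, ∑ w, τ z w = ∑ z, r z by
    refine ⟨τ, hτ0, hτπ, ?_, ?_⟩
    · intro z
      by_contra hne
      have hlt : ∑ w, τ z w < r z := lt_of_le_of_ne (hτr z) hne
      have : ∑ z, ∑ w, τ z w < ∑ z, r z :=
        Finset.sum_lt_sum (fun i _ => hτr i) ⟨z, Finset.mem_univ z, hlt⟩
      rw [hFr] at this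
      exact lt_irrefl _ this
    · intro w
      by_contra hne
      have hlt : ∑ z, τ z w < c w := lt_of_le_of_ne (hτc w) hne
      have hFc : ∑ z, ∑ w, τ z w = ∑ w, ∑ z, τ z w := Finset.sum_comm
      have : ∑ z, ∑ w, τ z w < ∑ w, c w := by
        rw [hFc]
        exact Finset.sum_lt_sum (fun i _ => hτc i) ⟨w, Finset.mem_univ w, hlt⟩
      rw [hFr, htot] at this
      exact lt_irrefl _ this
  by_contra hne
  obtain ⟨z₀, hz₀⟩ : ∃ z₀, ∑ w, τ z₀ w < r z₀ := by
    by_contra hno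
    push_neg at hno
    exact hne (Finset.sum_congr rfl fun z _ => le_antisymm (hτr z) (hno z))
  set step : V → V → Prop := fun z z' => ∃ w, τ z w < π z w ∧ 0 < τ z' w with hstepdef
  set Avail : V → Prop := fun z => ∀ ε > 0, ∃ δ > 0, ∃ τ', τ' ∈ M ∧
      (∑ a, ∑ b, τ' a b) = (∑ a, ∑ b, τ a b) ∧ (∀ w, ∑ a, τ' a w = ∑ a, τ a w) ∧
      (∑ w, τ' z w) + δ ≤ r z ∧ (∀ a b, |τ' a b - τ a b| ≤ ε) with hAvail
  have hbase : Avail z₀ := by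
    intro ε hε
    exact ⟨r z₀ - ∑ w, τ z₀ w, by linarith, τ, ⟨hτ0, hτπ, hτr, hτc⟩, rfl,
      fun w => rfl, by linarith, fun a b => by simp [hε.le]⟩
  have hstep_avail : ∀ z z', Avail z → step z z' → Avail z' := by
    intro z z' hAz hs
    obtain ⟨w, hzw, hz'w⟩ := hs
    by_cases hzz' : z = z'
    · subst hzz'; exact hAz
    intro ε hε
    set ε' := min (min (ε/2) ((π z w - τ z w)/2)) (τ z' w / 2) with hε'
    have hε'0 : 0 < ε' := by
      apply lt_min (lt_min (by linarith) (by linarith)) (by linarith)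
    obtain ⟨δ, hδ, τ', hτ'M, hτ'F, hτ'col, hτ'row, hτ'close⟩ := hAz ε' hε'0
    set γ := min δ ε' with hγ
    have hγ0 : 0 < γ := lt_min hδ hε'0
    have hγδ : γ ≤ δ := min_le_left _ _
    have hγε' : γ ≤ ε' := min_le_right _ _
    have hε'1 : ε' ≤ ε/2 := le_trans (min_le_left _ _) (min_le_left _ _)
    have hε'2 : ε' ≤ (π z w - τ z w)/2 := le_trans (min_le_left _ _) (min_le_right _ _)
    have hε'3 : ε' ≤ τ z' w / 2 := min_le_right _ _
    obtain ⟨hτ'0, hτ'π, hτ'r, hτ'c⟩ := hτ'M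
    set τ'' : V → V → ℝ := fun a b => τ' a b + upd z w γ a b - upd z' w γ a b with hτ''def
    have happly : ∀ a b, τ'' a b = τ' a b + (if a = z ∧ b = w then γ else 0)
        - (if a = z' ∧ b = w then γ else 0) := by
      intro a b
      simp only [hτ''def, upd]
    have hrow'' : ∀ a, ∑ b, τ'' a b
        = (∑ b, τ' a b) + (if a = z then γ else 0) - (if a = z' then γ else 0) := by
      intro a
      rw [hτ''def]
      simp only [Finset.sum_sub_distrib, Finset.sum_add_distrib, upd_row]
    have hcol'' : ∀ b, ∑ a, τ'' a b = ∑ a, τ' a b := by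
      intro b
      rw [hτ''def]
      simp only [Finset.sum_sub_distrib, Finset.sum_add_distrib, upd_col]
      ring
    have hτ''M : τ'' ∈ M := by
      refine ⟨?_, ?_, ?_, ?_⟩
      · intro a b
        rw [happly]
        by_cases c2 : a = z' ∧ b = w
        · have c1 : ¬(a = z ∧ b = w) := fun h => hzz' (h.1.symm.trans c2.1)
          rw [if_pos c2, if_neg c1, add_zero]
          obtain ⟨rfl, rfl⟩ := c2
          have := hτ'close a b
          have h1 : τ a b - ε' ≤ τ' a b := by
            have := abs_le.mp (hτ'close a b)
            linarith [this.1]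
          linarith
        · rw [if_neg c2, sub_zero]
          have := hτ'0 a b
          split_ifs
          · linarith
          · linarith
      · intro a b
        rw [happly]
        by_cases c1 : a = z ∧ b = w
        · have c2 : ¬(a = z' ∧ b = w) := fun h => hzz' (c1.1.symm.trans h.1)
          rw [if_pos c1, if_neg c2, sub_zero]
          obtain ⟨rfl, rfl⟩ := c1
          have h1 : τ' a b ≤ τ a b + ε' := by
            have := abs_le.mp (hτ'close a b)
            linarith [this.2]
          linarith
        · rw [if_neg c1, add_zero]
          have := hτ'π a b
          split_ifs
          · linarith [hγ0.le]
          · linarith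
      · intro a
        rw [hrow'' a]
        by_cases ha : a = z
        · subst ha
          rw [if_pos rfl, if_neg (fun h => hzz' h)]
          linarith
        · rw [if_neg ha]
          split_ifs with ha'
          · subst ha'
            linarith [hτ'r a]
          · linarith [hτ'r a]
      · intro b
        rw [hcol'' b, hτ'col b]
        exact hτc b
    have hF'' : (∑ a, ∑ b, τ'' a b) = ∑ a, ∑ b, τ a b := by
      rw [Finset.sum_congr rfl (fun a _ => hrow'' a)]
      rw [← hτ'F]
      simp [Finset.sum_add_distrib, Finset.sum_sub_distrib,
        Finset.sum_ite_eq' Finset.univ z (fun _ => γ),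
        Finset.sum_ite_eq' Finset.univ z' (fun _ => γ)]
    have hcol''2 : ∀ b, ∑ a, τ'' a b = ∑ a, τ a b := fun b => by
      rw [hcol'' b]; exact hτ'col b
    have hrowz' : (∑ b, τ'' z' b) + γ ≤ r z' := by
      rw [hrow'' z']
      rw [if_neg (fun h : z' = z => hzz' h.symm), if_pos rfl]
      linarith [hτ'r z']
    have hclose'' : ∀ a b, |τ'' a b - τ a b| ≤ ε := by
      intro a b
      rw [happly]
      have h1 := hτ'close a b
      have h4 : |(if a = z ∧ b = w then γ else 0) - (if a = z' ∧ b = w then γ else 0)| ≤ γ := by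
        by_cases c1 : a = z ∧ b = w
        · have c2 : ¬(a = z' ∧ b = w) := fun h => hzz' (c1.1.symm.trans h.1)
          rw [if_pos c1, if_neg c2, sub_zero, abs_of_nonneg hγ0.le]
        · rw [if_neg c1]
          by_cases c2 : a = z' ∧ b = w
          · rw [if_pos c2, zero_sub, abs_neg, abs_of_nonneg hγ0.le]
          · rw [if_neg c2]
            simpa using hγ0.le
      have heq : τ' a b + (if a = z ∧ b = w then γ else 0) - (if a = z' ∧ b = w then γ else 0)
          - τ a b = (τ' a b - τ a b) +
          ((if a = z ∧ b = w then γ else 0) - (if a = z' ∧ b = w then γ else 0)) := by ring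
      rw [heq]
      calc |(τ' a b - τ a b) + ((if a = z ∧ b = w then γ else 0)
            - (if a = z' ∧ b = w then γ else 0))|
          ≤ |τ' a b - τ a b| + |(if a = z ∧ b = w then γ else 0)
            - (if a = z' ∧ b = w then γ else 0)| := abs_add_le _ _
        _ ≤ ε' + γ := add_le_add h1 h4
        _ ≤ ε := by linarith
    exact ⟨γ, hγ0, τ'', hτ''M, hF'', hcol''2, hrowz', hclose''⟩
  -- reachable rows are available
  have hreach : ∀ z, Relation.ReflTransGen step z₀ z → Avail z := by
    intro z h
    induction h with
    | refl => exact hbase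
    | tail _ hs ih => exact hstep_avail _ _ ih hs
  -- saturation: columns adjacent to reachable rows are full
  have hsat : ∀ z, Avail z → ∀ w, τ z w < π z w → ∑ a, τ a w = c w := by
    intro z hAz w hzw
    by_contra hne'
    have hlt : ∑ a, τ a w < c w := lt_of_le_of_ne (hτc w) hne'
    set ε' := min ((π z w - τ z w)/2) ((c w - ∑ a, τ a w)/2) with hε'
    have hε'0 : 0 < ε' := lt_min (by linarith) (by linarith)
    obtain ⟨δ, hδ, τ', hτ'M, hτ'F, hτ'col, hτ'row, hτ'close⟩ := hAz ε' hε'0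
    obtain ⟨hτ'0, hτ'π, hτ'r, hτ'c⟩ := hτ'M
    set γ := min δ ε' with hγ
    have hγ0 : 0 < γ := lt_min hδ hε'0
    set τ'' : V → V → ℝ := fun a b => τ' a b + upd z w γ a b with hτ''def
    have hrow'' : ∀ a, ∑ b, τ'' a b = (∑ b, τ' a b) + (if a = z then γ else 0) := by
      intro a
      rw [hτ''def]
      simp only [Finset.sum_add_distrib, upd_row]
    have hcol'' : ∀ b, ∑ a, τ'' a b = (∑ a, τ' a b) + (if b = w then γ else 0) := by
      intro b
      rw [hτ''def]
      simp only [Finset.sum_add_distrib, upd_col]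
    have hτ''M : τ'' ∈ M := by
      refine ⟨?_, ?_, ?_, ?_⟩
      · intro a b
        simp only [hτ''def, upd]
        have := hτ'0 a b
        split_ifs
        · linarith [hγ0.le]
        · linarith
      · intro a b
        simp only [hτ''def, upd]
        split_ifs with hc1
        · obtain ⟨rfl, rfl⟩ := hc1
          have h1 : τ' a b ≤ τ a b + ε' := by
            have := abs_le.mp (hτ'close a b)
            linarith [this.2]
          have h2 : γ ≤ ε' := min_le_right _ _
          have h3 : ε' ≤ (π a b - τ a b)/2 := min_le_left _ _
          linarith
        · have := hτ'π a b
          linarith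
      · intro a
        rw [hrow'' a]
        by_cases ha : a = z
        · subst ha
          rw [if_pos rfl]
          have : γ ≤ δ := min_le_left _ _
          linarith
        · rw [if_neg ha, add_zero]
          exact hτ'r a
      · intro b
        rw [hcol'' b, hτ'col b]
        by_cases hb : b = w
        · subst hb
          rw [if_pos rfl]
          have h2 : γ ≤ ε' := min_le_right _ _
          have h3 : ε' ≤ (c b - ∑ a, τ a b)/2 := min_le_right _ _
          linarith
        · rw [if_neg hb, add_zero]
          exact hτc b
    have hF'' : (∑ a, ∑ b, τ'' a b) > ∑ a, ∑ b, τ a b := by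
      rw [Finset.sum_congr rfl (fun a _ => hrow'' a), Finset.sum_add_distrib,
        Finset.sum_ite_eq' Finset.univ z (fun _ => γ)]
      simp only [Finset.mem_univ, if_pos]
      rw [hτ'F]
      linarith
    exact absurd (hmax hτ''M) (not_le.mpr hF'')
  -- the cut determined by reachable rows
  set S : Finset V := Finset.univ.filter (fun z => Relation.ReflTransGen step z₀ z) with hS
  set T : Finset V := Finset.univ.filter
      (fun w => ∃ z ∈ S, τ z w < π z w) with hT
  have hz₀S : z₀ ∈ S := by
    rw [hS]
    simp [Relation.ReflTransGen.refl]
  have hTfull : ∀ w ∈ T, ∑ a, τ a w = c w := by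
    intro w hw
    rw [hT, Finset.mem_filter] at hw
    obtain ⟨_, z, hzS, hzw⟩ := hw
    rw [hS, Finset.mem_filter] at hzS
    exact hsat z (hreach z hzS.2) w hzw
  have hTclosed : ∀ w ∈ T, ∀ a, 0 < τ a w → a ∈ S := by
    intro w hw a ha
    rw [hT, Finset.mem_filter] at hw
    obtain ⟨_, z, hzS, hzw⟩ := hw
    rw [hS, Finset.mem_filter] at hzS ⊢
    exact ⟨Finset.mem_univ a, hzS.2.tail ⟨w, hzw, ha⟩⟩
  have hSfullrow : ∀ z ∈ S, ∀ w ∉ T, τ z w = π z w := by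
    intro z hz w hw
    rw [hT, Finset.mem_filter] at hw
    push_neg at hw
    exact le_antisymm (hτπ z w) (hw (Finset.mem_univ w) z hz)
  -- counting contradiction
  have hcount1 : ∑ z ∈ S, ∑ w, τ z w
      = (∑ w ∈ T, ∑ z ∈ S, τ z w) + ∑ z ∈ S, ∑ w ∈ Tᶜ, π z w := by
    have : ∀ z ∈ S, ∑ w, τ z w = (∑ w ∈ T, τ z w) + ∑ w ∈ Tᶜ, π z w := by
      intro z hz
      rw [← Finset.sum_add_sum_compl T (fun w => τ z w)]
      congr 1
      exact Finset.sum_congr rfl fun w hw => hSfullrow z hz w (Finset.mem_compl.mp hw)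
    rw [Finset.sum_congr rfl this, Finset.sum_add_distrib]
    congr 1
    exact Finset.sum_comm
  -- rows outside S do not feed columns of T
  have hcount2 : ∀ w ∈ T, ∑ z ∈ S, τ z w = c w := by
    intro w hw
    rw [← hTfull w hw]
    rw [← Finset.sum_add_sum_compl S (fun z => τ z w)]
    have : ∀ z ∈ Sᶜ, τ z w = 0 := by
      intro z hz
      rw [Finset.mem_compl] at hz
      by_contra h0
      exact hz (hTclosed w hw z (lt_of_le_of_ne (hτ0 z w) (Ne.symm h0)))
    rw [Finset.sum_congr rfl this, Finset.sum_const_zero, add_zero]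
  have hlhs : ∑ z ∈ S, ∑ w, τ z w < ∑ z ∈ S, r z := by
    apply Finset.sum_lt_sum (fun z _ => hτr z)
    exact ⟨z₀, hz₀S, hz₀⟩
  have hfinal : ∑ z ∈ S, r z ≤ (∑ z ∈ S, ∑ w ∈ Tᶜ, π z w) + ∑ w ∈ T, c w := hcut S T
  rw [← Finset.sum_congr rfl hcount2] at hfinal
  rw [hcount1] at hlhs
  linarith
end Flow


section Finite

variable [Fintype V] (G : SimpleGraph V) [G.LocallyFinite]

lemma cost_finsum (π : V → V → ℝ) :
    (∑ᶠ z, ∑ᶠ w, (G.dist z w : ℝ) * π z w) = ∑ z, ∑ w, (G.dist z w : ℝ) * π z w := by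
  rw [finsum_eq_sum_of_fintype]
  exact Finset.sum_congr rfl fun z _ => finsum_eq_sum_of_fintype _

lemma isCoupling_fin {μ₁ μ₂ : V → ℝ} {π : V → V → ℝ} :
    IsCoupling μ₁ μ₂ π ↔ ((∀ z w, 0 ≤ π z w) ∧ (∀ z, ∑ w, π z w = μ₁ z) ∧
      (∀ w, ∑ z, π z w = μ₂ w)) := by
  unfold IsCoupling
  simp only [finsum_eq_sum_of_fintype]

open Classical in
lemma sum_mu (p : ℝ) (x : V) (S : Finset V) :
    ∑ z ∈ S, mu G p x z = (if x ∈ S then p else 0)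
      + ((S.filter (fun z => G.Adj x z)).card : ℝ) * ((1 - p)/(G.degree x)) := by
  rw [Finset.sum_congr rfl (fun z _ => mu_split G p x z), Finset.sum_add_distrib]
  congr 1
  · exact Finset.sum_ite_eq' S x (fun _ => p)
  · rw [← Finset.sum_filter, Finset.sum_const, nsmul_eq_mul]

open Classical in
lemma sum_mu_univ {x : V} (hdeg : 0 < G.degree x) (p : ℝ) :
    ∑ z, mu G p x z = 1 := by
  rw [sum_mu]
  have h1 : (Finset.univ.filter (fun z => G.Adj x z)) = G.neighborFinset x := by
    ext z; simp [SimpleGraph.mem_neighborFinset]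
  rw [if_pos (Finset.mem_univ x), h1, SimpleGraph.card_neighborFinset_eq_degree]
  have hdne : (G.degree x : ℝ) ≠ 0 := by positivity
  field_simp
  ring

lemma mu_convex (p q θ : ℝ) (x : V) (hpq : p = θ * q) (z : V) :
    mu G p x z = (1 - θ) * mu G 0 x z + θ * mu G q x z := by
  by_cases h1 : z = x
  · subst h1
    rw [mu_self, mu_self, mu_self, hpq]; ring
  · by_cases h2 : G.Adj x z
    · rw [mu_adj G p h2, mu_adj G 0 h2, mu_adj G q h2, hpq]
      field_simp
      ring
    · rw [mu_zero' G p h1 h2, mu_zero' G 0 h1 h2, mu_zero' G q h1 h2]; ring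

lemma Wset_nonempty {μ₁ μ₂ : V → ℝ} (h1 : ∑ z, μ₁ z = 1) (h2 : ∑ w, μ₂ w = 1)
    (hn1 : ∀ z, 0 ≤ μ₁ z) (hn2 : ∀ w, 0 ≤ μ₂ w) :
    {r | ∃ π, IsCoupling μ₁ μ₂ π ∧
      r = ∑ᶠ z, ∑ᶠ w, (G.dist z w : ℝ) * π z w}.Nonempty := by
  refine ⟨_, (fun z w => μ₁ z * μ₂ w), ?_, rfl⟩
  rw [isCoupling_fin]
  refine ⟨fun z w => mul_nonneg (hn1 z) (hn2 w), fun z => ?_, fun w => ?_⟩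
  · rw [← Finset.mul_sum, h2, mul_one]
  · rw [← Finset.sum_mul, h1, one_mul]

lemma Wset_lower {μ₁ μ₂ : V → ℝ} :
    ∀ r ∈ {r | ∃ π, IsCoupling μ₁ μ₂ π ∧
      r = ∑ᶠ z, ∑ᶠ w, (G.dist z w : ℝ) * π z w}, (0:ℝ) ≤ r := by
  rintro r ⟨π, ⟨hnn, _, _⟩, rfl⟩
  exact finsum_nonneg fun z => finsum_nonneg fun w =>
    mul_nonneg (Nat.cast_nonneg _) (hnn z w)

end Finite


set_option maxHeartbeats 2000000 in
open Classical in
lemma W_finite_chord {V : Type*} [Fintype V] (G : SimpleGraph V) [G.LocallyFinite]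
    (hconn : G.Connected) {x y : V} (hd : 2 ≤ G.dist x y)
    {p : ℝ} (hp0 : 0 ≤ p)
    (hpq : p ≤ 1/(1 + (Nat.lcm (G.degree x) (G.degree y) : ℝ))) :
    W1 G (mu G p x) (mu G p y)
      = (1 - p * (1 + (Nat.lcm (G.degree x) (G.degree y) : ℝ)))
          * W1 G (mu G 0 x) (mu G 0 y)
        + (p * (1 + (Nat.lcm (G.degree x) (G.degree y) : ℝ)))
          * W1 G (mu G (1/(1 + (Nat.lcm (G.degree x) (G.degree y) : ℝ))) x)
                 (mu G (1/(1 + (Nat.lcm (G.degree x) (G.degree y) : ℝ))) y) := by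
  classical
  have hxy : x ≠ y := by rintro rfl; rw [SimpleGraph.dist_self] at hd; omega
  have hdx : 0 < G.degree x := degree_pos G hconn hxy
  have hdy : 0 < G.degree y := degree_pos G hconn (Ne.symm hxy)
  set l : ℕ := Nat.lcm (G.degree x) (G.degree y) with hldef
  have hlpos : 0 < l := Nat.lcm_pos hdx hdy
  set L : ℝ := (l : ℝ) with hLdef
  have hL1 : 1 ≤ L := by
    rw [hLdef]
    exact_mod_cast Nat.one_le_iff_ne_zero.mpr hlpos.ne'
  set qq : ℝ := 1/(1 + L) with hqqdef
  have h1L : (0:ℝ) < 1 + L := by linarith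
  have hqq0 : 0 < qq := by rw [hqqdef]; positivity
  have hqq1 : qq ≤ 1 := by rw [hqqdef]; rw [div_le_one h1L]; linarith
  set θ : ℝ := p * (1 + L) with hθdef
  have hθ0 : 0 ≤ θ := mul_nonneg hp0 h1L.le
  have hθ1 : θ ≤ 1 := by
    rw [hθdef]
    calc p * (1 + L) ≤ (1/(1+L)) * (1 + L) := by
          apply mul_le_mul_of_nonneg_right hpq h1L.le
      _ = 1 := by field_simp
  have hpθ : p = θ * qq := by
    rw [hθdef, hqqdef]
    field_simp
  have hp1 : p ≤ 1 := by
    calc p ≤ qq := hpq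
      _ ≤ 1 := hqq1
  -- nonnegativity and total mass of the measures involved
  have hmunn : ∀ p' : ℝ, 0 ≤ p' → p' ≤ 1 → ∀ (v : V), (∀ z, 0 ≤ mu G p' v z) := by
    intro p' h0 h1 v z
    unfold mu
    split_ifs
    · exact h0
    · exact div_nonneg (by linarith) (Nat.cast_nonneg _)
    · exact le_refl 0
  have hμsum : ∀ p' : ℝ, (∑ z, mu G p' x z = 1) ∧ (∑ z, mu G p' y z = 1) :=
    fun p' => ⟨sum_mu_univ G hdx p', sum_mu_univ G hdy p'⟩
  -- the three coupling sets
  set C : ℝ → Set ℝ := fun p' => {r | ∃ π, IsCoupling (mu G p' x) (mu G p' y) π ∧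
      r = ∑ᶠ z, ∑ᶠ w, (G.dist z w : ℝ) * π z w} with hCdef
  have hCne : ∀ p' : ℝ, 0 ≤ p' → p' ≤ 1 → (C p').Nonempty := fun p' h0 h1 =>
    Wset_nonempty G (hμsum p').1 (hμsum p').2 (hmunn p' h0 h1 x) (hmunn p' h0 h1 y)
  have hCbdd : ∀ p' : ℝ, BddBelow (C p') := fun p' => ⟨0, fun r hr => Wset_lower G r hr⟩
  have hW1C : ∀ p' : ℝ, W1 G (mu G p' x) (mu G p' y) = sInf (C p') := fun _ => rfl
  set W0 : ℝ := W1 G (mu G 0 x) (mu G 0 y) with hW0def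
  set Wq : ℝ := W1 G (mu G qq x) (mu G qq y) with hWqdef
  have hgoal : W1 G (mu G p x) (mu G p y) = (1 - θ) * W0 + θ * Wq := by
    have hub : W1 G (mu G p x) (mu G p y) ≤ (1 - θ) * W0 + θ * Wq := by
      apply le_of_forall_pos_le_add
      intro ε hε
      obtain ⟨r0, hr0C, hr0lt⟩ := (csInf_lt_iff (hCbdd 0) (hCne 0 le_rfl zero_le_one)).mp
        (show sInf (C 0) < W0 + ε/2 from by rw [← hW1C 0]; linarith)
      obtain ⟨rq, hrqC, hrqlt⟩ := (csInf_lt_iff (hCbdd qq) (hCne qq hqq0.le hqq1)).mp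
        (show sInf (C qq) < Wq + ε/2 from by rw [← hW1C qq]; linarith)
      obtain ⟨π0, hπ0c, rfl⟩ := hr0C
      obtain ⟨πq, hπqc, rfl⟩ := hrqC
      rw [isCoupling_fin] at hπ0c hπqc
      obtain ⟨h0nn, h0r, h0c⟩ := hπ0c
      obtain ⟨hqnn, hqr, hqc⟩ := hπqc
      set πm : V → V → ℝ := fun z w => (1-θ) * π0 z w + θ * πq z w with hπm
      have hmix : W1 G (mu G p x) (mu G p y) ≤ ∑ᶠ z, ∑ᶠ w, (G.dist z w:ℝ) * πm z w := by
        apply csInf_le (hCbdd p)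
        refine ⟨πm, ?_, rfl⟩
        rw [isCoupling_fin]
        refine ⟨fun z w => add_nonneg (mul_nonneg (by linarith) (h0nn z w))
          (mul_nonneg hθ0 (hqnn z w)), fun z => ?_, fun w => ?_⟩
        · simp only [hπm]
          rw [Finset.sum_add_distrib, ← Finset.mul_sum, ← Finset.mul_sum, h0r z, hqr z]
          exact (mu_convex G p qq θ x hpθ z).symm
        · simp only [hπm]
          rw [Finset.sum_add_distrib, ← Finset.mul_sum, ← Finset.mul_sum, h0c w, hqc w]
          exact (mu_convex G p qq θ y hpθ w).symm
      have hcostm : (∑ᶠ z, ∑ᶠ w, (G.dist z w:ℝ) * πm z w)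
          = (1-θ) * (∑ᶠ z, ∑ᶠ w, (G.dist z w:ℝ) * π0 z w)
            + θ * (∑ᶠ z, ∑ᶠ w, (G.dist z w:ℝ) * πq z w) := by
        rw [cost_finsum, cost_finsum, cost_finsum, Finset.mul_sum, Finset.mul_sum,
          ← Finset.sum_add_distrib]
        refine Finset.sum_congr rfl fun z _ => ?_
        rw [Finset.mul_sum, Finset.mul_sum, ← Finset.sum_add_distrib]
        refine Finset.sum_congr rfl fun w _ => ?_
        simp only [hπm]
        ring
      have hind : (1-θ) * (∑ᶠ z, ∑ᶠ w, (G.dist z w:ℝ) * π0 z w)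
            + θ * (∑ᶠ z, ∑ᶠ w, (G.dist z w:ℝ) * πq z w)
          ≤ (1-θ) * (W0 + ε/2) + θ * (Wq + ε/2) :=
        add_le_add (mul_le_mul_of_nonneg_left hr0lt.le (by linarith))
          (mul_le_mul_of_nonneg_left hrqlt.le hθ0)
      calc W1 G (mu G p x) (mu G p y) ≤ ∑ᶠ z, ∑ᶠ w, (G.dist z w:ℝ) * πm z w := hmix
        _ = _ := hcostm
        _ ≤ (1-θ) * (W0 + ε/2) + θ * (Wq + ε/2) := hind
        _ ≤ (1 - θ) * W0 + θ * Wq + ε := by nlinarith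
    have hlb : (1 - θ) * W0 + θ * Wq ≤ W1 G (mu G p x) (mu G p y) := by
      rw [hW1C p]
      apply le_csInf (hCne p hp0 hp1)
      rintro r ⟨π, hπc, rfl⟩
      rw [isCoupling_fin] at hπc
      obtain ⟨hπnn, hπr, hπcc⟩ := hπc
      rcases eq_or_lt_of_le hθ0 with hθz | hθpos
      · have hp' : p = 0 := by rw [hpθ, ← hθz]; ring
        have hle : W0 ≤ ∑ᶠ z, ∑ᶠ w, (G.dist z w:ℝ) * π z w := by
          apply csInf_le (hCbdd 0)
          refine ⟨π, ?_, rfl⟩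
          rw [isCoupling_fin]
          rw [hp'] at hπr hπcc
          exact ⟨hπnn, hπr, hπcc⟩
        rw [← hθz]
        simpa using hle
      rcases eq_or_lt_of_le hθ1 with hθo | hθlt
      · have hp' : p = qq := by rw [hpθ, hθo, one_mul]
        have hle : Wq ≤ ∑ᶠ z, ∑ᶠ w, (G.dist z w:ℝ) * π z w := by
          apply csInf_le (hCbdd qq)
          refine ⟨π, ?_, rfl⟩
          rw [isCoupling_fin]
          rw [hp'] at hπr hπcc
          exact ⟨hπnn, hπr, hπcc⟩
        rw [hθo]
        simpa using hle
      set r' : V → ℝ := fun z => θ * mu G qq x z with hr'def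
      set c' : V → ℝ := fun w => θ * mu G qq y w with hc'def
      have hcut : ∀ S T : Finset V,
          ∑ z ∈ S, r' z ≤ (∑ z ∈ S, ∑ w ∈ Tᶜ, π z w) + ∑ w ∈ T, c' w := by
        intro S T
        have h1θ' : 0 < 1 - θ := by linarith
        set ax : ℕ := (S.filter (fun z => G.Adj x z)).card with haxdef
        set bb : ℕ := ((Tᶜ).filter (fun w => G.Adj y w)).card with hbbdef
        set kx : ℕ := l / G.degree x with hkxdef
        set ky : ℕ := l / G.degree y with hkydef
        have hkxd : kx * G.degree x = l := Nat.div_mul_cancel (Nat.dvd_lcm_left _ _)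
        have hkyd : ky * G.degree y = l := Nat.div_mul_cancel (Nat.dvd_lcm_right _ _)
        have hdxne : ((G.degree x : ℝ)) ≠ 0 := by positivity
        have hdyne : ((G.degree y : ℝ)) ≠ 0 := by positivity
        have hkxR : (kx:ℝ) * (G.degree x:ℝ) = L := by rw [hLdef]; exact_mod_cast hkxd
        have hkyR : (ky:ℝ) * (G.degree y:ℝ) = L := by rw [hLdef]; exact_mod_cast hkyd
        have h1qq : 1 - qq = L * qq := by
          rw [hqqdef]
          field_simp
          ring
        have ekx : (1-qq)/(G.degree x:ℝ) = (kx:ℝ)*qq := by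
          rw [h1qq, ← hkxR]
          field_simp
        have eky : (1-qq)/(G.degree y:ℝ) = (ky:ℝ)*qq := by
          rw [h1qq, ← hkyR]
          field_simp
        have hAq : ∑ z ∈ S, mu G qq x z
            = (if x ∈ S then qq else 0) + (ax:ℝ) * ((kx:ℝ)*qq) := by
          rw [sum_mu, ekx]
        have hBq : ∑ w ∈ Tᶜ, mu G qq y w
            = (if y ∈ Tᶜ then qq else 0) + (bb:ℝ) * ((ky:ℝ)*qq) := by
          rw [sum_mu, eky]
        have hA0 : ∑ z ∈ S, mu G 0 x z = (ax:ℝ) * (1/(G.degree x:ℝ)) := by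
          rw [sum_mu]
          norm_num
          left; convert haxdef.symm
        have hB0 : ∑ w ∈ Tᶜ, mu G 0 y w = (bb:ℝ) * (1/(G.degree y:ℝ)) := by
          rw [sum_mu]
          norm_num
          left; convert hbbdef.symm
        have hsplitq : ∑ w ∈ T, mu G qq y w = 1 - ∑ w ∈ Tᶜ, mu G qq y w := by
          have h := Finset.sum_add_sum_compl T (mu G qq y)
          rw [sum_mu_univ G hdy] at h
          linarith
        have hsplit0 : ∑ w ∈ T, mu G 0 y w = 1 - ∑ w ∈ Tᶜ, mu G 0 y w := by
          have h := Finset.sum_add_sum_compl T (mu G 0 y)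
          rw [sum_mu_univ G hdy] at h
          linarith
        have hsplitp : ∑ w ∈ T, mu G p y w = 1 - ∑ w ∈ Tᶜ, mu G p y w := by
          have h := Finset.sum_add_sum_compl T (mu G p y)
          rw [sum_mu_univ G hdy] at h
          linarith
        have hqql : ((l:ℝ)+1)*qq = 1 := by
          rw [hqqdef, hLdef]
          field_simp
          ring
        simp only [hr'def, hc'def]
        rw [← Finset.mul_sum, ← Finset.mul_sum]
        by_cases hcase : ax * kx + (if x ∈ S then 1 else 0) + bb * ky
            + (if y ∈ Tᶜ then 1 else 0) ≤ l + 1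
        · -- small case: the qq-masses fit below total mass 1
          have hq1 : ∑ z ∈ S, mu G qq x z + ∑ w ∈ Tᶜ, mu G qq y w ≤ 1 := by
            have hn : ((ax * kx + (if x ∈ S then 1 else 0) + bb * ky
                + (if y ∈ Tᶜ then 1 else 0) : ℕ) : ℝ) ≤ ((l + 1 : ℕ) : ℝ) := by
              exact_mod_cast hcase
            rw [hAq, hBq]
            by_cases hxS : x ∈ S <;> by_cases hyT : y ∈ Tᶜ <;>
                simp only [hxS, hyT, if_true, if_false] at hn ⊢ <;>
                push_cast at hn <;>
                nlinarith [mul_nonneg (sub_nonneg.mpr hn) hqq0.le, hqql, hqq0.le]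
          have hπnn' : 0 ≤ ∑ z ∈ S, ∑ w ∈ Tᶜ, π z w :=
            Finset.sum_nonneg fun z _ => Finset.sum_nonneg fun w _ => hπnn z w
          have hst : ∑ z ∈ S, mu G qq x z ≤ ∑ w ∈ T, mu G qq y w := by
            rw [hsplitq]
            linarith
          have := mul_le_mul_of_nonneg_left hst hθ0
          linarith
        · -- large case: use the lcm integrality
          push_neg at hcase
          have hgeN : l ≤ ax * kx + bb * ky := by
            by_cases hxS : x ∈ S <;> by_cases hyT : y ∈ Tᶜ <;>
              simp only [hxS, hyT, if_true, if_false] at hcase <;> omega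
          have hgeR : (L:ℝ) ≤ (ax:ℝ)*(kx:ℝ) + (bb:ℝ)*(ky:ℝ) := by
            rw [hLdef]
            exact_mod_cast hgeN
          have hL0 : (0:ℝ) < L := by linarith
          have hkxne : (kx:ℝ) ≠ 0 := by
            intro h
            rw [h, zero_mul] at hkxR
            linarith
          have hkyne : (ky:ℝ) ≠ 0 := by
            intro h
            rw [h, zero_mul] at hkyR
            linarith
          have hA0B : 1 ≤ ∑ z ∈ S, mu G 0 x z + ∑ w ∈ Tᶜ, mu G 0 y w := by
            rw [hA0, hB0]
            have e1 : (ax:ℝ) * (1/(G.degree x:ℝ)) = (ax:ℝ)*(kx:ℝ)/L := by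
              rw [← hkxR]
              field_simp
            have e2 : (bb:ℝ) * (1/(G.degree y:ℝ)) = (bb:ℝ)*(ky:ℝ)/L := by
              rw [← hkyR]
              field_simp
            rw [e1, e2, ← add_div, le_div_iff₀ hL0, one_mul]
            exact hgeR
          have hrowsum : ∀ z ∈ S, ∑ w ∈ Tᶜ, π z w = mu G p x z - ∑ w ∈ T, π z w := by
            intro z _
            have h := Finset.sum_add_sum_compl T (fun w => π z w)
            rw [hπr z] at h
            linarith
          have hπT : ∑ z ∈ S, ∑ w ∈ T, π z w ≤ ∑ w ∈ T, mu G p y w := by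
            rw [Finset.sum_comm]
            apply Finset.sum_le_sum
            intro w _
            rw [← hπcc w]
            exact Finset.sum_le_sum_of_subset_of_nonneg (Finset.subset_univ S)
              (fun i _ _ => hπnn i w)
          have hkey2 : ∑ z ∈ S, mu G p x z - ∑ w ∈ T, mu G p y w
              ≤ ∑ z ∈ S, ∑ w ∈ Tᶜ, π z w := by
            rw [Finset.sum_congr rfl hrowsum, Finset.sum_sub_distrib]
            linarith [hπT]
          have hconvS : ∑ z ∈ S, mu G p x z
              = (1-θ) * (∑ z ∈ S, mu G 0 x z) + θ * (∑ z ∈ S, mu G qq x z) := by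
            rw [Finset.mul_sum, Finset.mul_sum, ← Finset.sum_add_distrib]
            exact Finset.sum_congr rfl fun z _ => mu_convex G p qq θ x hpθ z
          have hconvT : ∑ w ∈ T, mu G p y w
              = (1-θ) * (∑ w ∈ T, mu G 0 y w) + θ * (∑ w ∈ T, mu G qq y w) := by
            rw [Finset.mul_sum, Finset.mul_sum, ← Finset.sum_add_distrib]
            exact Finset.sum_congr rfl fun w _ => mu_convex G p qq θ y hpθ w
          have hB0T : (1-θ) * (∑ w ∈ T, mu G 0 y w)
              ≤ (1-θ) * (∑ z ∈ S, mu G 0 x z) := by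
            apply mul_le_mul_of_nonneg_left _ h1θ'.le
            rw [hsplit0]
            linarith
          linarith [hkey2, hconvS, hconvT, hB0T]
      obtain ⟨τ, hτnn, hτle, hτrow, hτcol⟩ := flow_exists π r' c' hπnn
        (fun z => mul_nonneg hθ0 (hmunn qq hqq0.le hqq1 x z))
        (fun w => mul_nonneg hθ0 (hmunn qq hqq0.le hqq1 y w))
        (by simp only [hr'def, hc'def]
            rw [← Finset.mul_sum, ← Finset.mul_sum, (hμsum qq).1, (hμsum qq).2])
        hcut
      set σ0 : V → V → ℝ := fun z w => (π z w - τ z w)/(1-θ) with hσ0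
      set σq : V → V → ℝ := fun z w => τ z w/θ with hσq
      have hθn0 : θ ≠ 0 := hθpos.ne'
      have h1θ : 0 < 1 - θ := by linarith
      have hmem0 : W0 ≤ ∑ z, ∑ w, (G.dist z w:ℝ) * σ0 z w := by
        apply csInf_le (hCbdd 0)
        refine ⟨σ0, ?_, (cost_finsum G σ0).symm⟩
        rw [isCoupling_fin]
        refine ⟨fun z w => div_nonneg (by linarith [hτle z w]) h1θ.le, fun z => ?_, fun w => ?_⟩
        · simp only [hσ0]
          rw [← Finset.sum_div, Finset.sum_sub_distrib, hπr z, hτrow z, hr'def]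
          have hcz := mu_convex G p qq θ x hpθ z
          rw [hcz]
          field_simp
          ring
        · simp only [hσ0]
          rw [← Finset.sum_div, Finset.sum_sub_distrib, hπcc w, hτcol w, hc'def]
          have hcz := mu_convex G p qq θ y hpθ w
          rw [hcz]
          field_simp
          ring
      have hmemq : Wq ≤ ∑ z, ∑ w, (G.dist z w:ℝ) * σq z w := by
        apply csInf_le (hCbdd qq)
        refine ⟨σq, ?_, (cost_finsum G σq).symm⟩
        rw [isCoupling_fin]
        refine ⟨fun z w => div_nonneg (hτnn z w) hθ0, fun z => ?_, fun w => ?_⟩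
        · simp only [hσq]
          rw [← Finset.sum_div, hτrow z, hr'def]
          field_simp
        · simp only [hσq]
          rw [← Finset.sum_div, hτcol w, hc'def]
          field_simp
      have hsplit : ∑ᶠ z, ∑ᶠ w, (G.dist z w:ℝ) * π z w
          = (1-θ) * (∑ z, ∑ w, (G.dist z w:ℝ) * σ0 z w)
            + θ * (∑ z, ∑ w, (G.dist z w:ℝ) * σq z w) := by
        rw [cost_finsum, Finset.mul_sum, Finset.mul_sum, ← Finset.sum_add_distrib]
        refine Finset.sum_congr rfl fun z _ => ?_
        rw [Finset.mul_sum, Finset.mul_sum, ← Finset.sum_add_distrib]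
        refine Finset.sum_congr rfl fun w _ => ?_
        simp only [hσ0, hσq]
        field_simp
        ring
      rw [hsplit]
      have h1 := mul_le_mul_of_nonneg_left hmem0 h1θ.le
      have h2 := mul_le_mul_of_nonneg_left hmemq hθ0
      linarith
    exact le_antisymm hub hlb
  rw [hgoal, hθdef]

/-- the idleness function is linear on `[0, 1/(1 + lcm(d_x, d_y))]`;
every critical point is at least `1/(1 + lcm(d_x, d_y))`. -/
theorem first_linear_part {V : Type*} (G : SimpleGraph V)
    (hconn : G.Connected) [G.LocallyFinite]
    (x y : V) (δ : ℕ) (hδ : G.dist x y = δ) (hδ2 : 2 ≤ δ) :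
    (∃ a b : ℝ, ∀ p ∈ Set.Icc (0 : ℝ) (1 / (1 + (Nat.lcm (G.degree x) (G.degree y) : ℝ))),
        kappa G p x y = a * p + b) ∧
      ∀ pstar ∈ Set.Ioo (0 : ℝ) 1,
        derivWithin (fun p => kappa G p x y) (Set.Iic pstar) pstar ≠
            derivWithin (fun p => kappa G p x y) (Set.Ici pstar) pstar →
          1 / (1 + (Nat.lcm (G.degree x) (G.degree y) : ℝ)) ≤ pstar := by
  classical
  set q : ℝ := 1 / (1 + (Nat.lcm (G.degree x) (G.degree y) : ℝ)) with hq
  have hq0 : 0 < q := by positivity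
  obtain ⟨a, b, hab⟩ : ∃ a b : ℝ, ∀ p ∈ Set.Icc (0:ℝ) q, kappa G p x y = a * p + b := by
    have hxy : x ≠ y := by
      rintro rfl
      rw [SimpleGraph.dist_self] at hδ
      omega
    have hd2 : 2 ≤ G.dist x y := by omega
    have hδne : ((G.dist x y : ℝ)) ≠ 0 := by
      have : G.dist x y ≠ 0 := by omega
      exact_mod_cast this
    have hLnn : (0:ℝ) ≤ (Nat.lcm (G.degree x) (G.degree y) : ℝ) := Nat.cast_nonneg _
    have h1L : (0:ℝ) < 1 + (Nat.lcm (G.degree x) (G.degree y) : ℝ) := by linarith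
    have hq1 : q ≤ 1 := by
      rw [hq, div_le_one h1L]
      linarith
    rcases finite_or_infinite V with hfin | hinf
    · haveI : Fintype V := Fintype.ofFinite V
      refine ⟨-((1 + (Nat.lcm (G.degree x) (G.degree y) : ℝ))
          * (W1 G (mu G (1/(1 + (Nat.lcm (G.degree x) (G.degree y) : ℝ))) x)
              (mu G (1/(1 + (Nat.lcm (G.degree x) (G.degree y) : ℝ))) y)
            - W1 G (mu G 0 x) (mu G 0 y))) / (G.dist x y : ℝ),
        1 - W1 G (mu G 0 x) (mu G 0 y) / (G.dist x y : ℝ), ?_⟩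
      intro p hp
      rw [hq] at hp
      unfold kappa
      rw [W_finite_chord G hconn hd2 hp.1 hp.2]
      field_simp
      ring
    · refine ⟨(((G.neighborFinset x ∩ G.neighborFinset y).card : ℝ)
          * max 0 (1/(G.degree x : ℝ) - 1/(G.degree y : ℝ))) / (G.dist x y : ℝ),
        1 - (((G.neighborFinset x ∩ G.neighborFinset y).card : ℝ)
          * max 0 (1/(G.degree x : ℝ) - 1/(G.degree y : ℝ))) / (G.dist x y : ℝ), ?_⟩
      intro p hp
      unfold kappa
      rw [W1_infinite G hconn hd2 hp.1 (le_trans hp.2 hq1)]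
      field_simp
      ring
  refine ⟨⟨a, b, hab⟩, ?_⟩
  intro pstar hps hne
  by_contra hlt
  push_neg at hlt
  apply hne
  have hmem : Set.Ioo (0:ℝ) q ∈ nhds pstar := Ioo_mem_nhds hps.1 hlt
  have hev : (fun p => kappa G p x y) =ᶠ[nhds pstar] (fun p => a * p + b) :=
    Filter.eventually_of_mem hmem fun p hp => hab p ⟨hp.1.le, hp.2.le⟩
  have hxval : kappa G pstar x y = a * pstar + b := hab pstar ⟨hps.1.le, hlt.le⟩
  have hder : HasDerivAt (fun p : ℝ => a * p + b) a pstar := by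
    simpa using (((hasDerivAt_id pstar).const_mul a).add_const b)
  have h1 : derivWithin (fun p => kappa G p x y) (Set.Iic pstar) pstar = a := by
    rw [(hev.filter_mono nhdsWithin_le_nhds).derivWithin_eq hxval]
    exact hder.hasDerivWithinAt.derivWithin (uniqueDiffOn_Iic pstar pstar Set.self_mem_Iic)
  have h2 : derivWithin (fun p => kappa G p x y) (Set.Ici pstar) pstar = a := by
    rw [(hev.filter_mono nhdsWithin_le_nhds).derivWithin_eq hxval]
    exact hder.hasDerivWithinAt.derivWithin (uniqueDiffOn_Ici pstar pstar Set.self_mem_Ici)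
  rw [h1, h2]

end OllivierLong
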